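/- Let n ≥ 1, let Y = {x̂ + Aζ : ζ ∈ ℝⁿ, ‖ζ‖_p ≤ √γ̄} be a core set with x̂ ∈ ℝⁿ, A ∈ ℝ^{n×n}, γ̄ > 0, p ∈ [1,∞], and let q be the conjugate exponent (1/p + 1/q = 1). Let Λ ∈ ℝ^{n×n} be symmetric positive semidefinite, q₀ ∈ ℝⁿ, κ ∈ ℝ and c ≥ 0. Then the semi-infinite constraint 'xᵀΛx + q₀ᵀx + κ + c · min_{x'∈Y} ‖x − x'‖_p ≥ 0 for all x ∈ ℝⁿ' holds if and only if there exists v ∈ ℝⁿ with ‖v‖_q ≤ c such that the (n+1)×(n+1) block matrix [Λ, ½(v + q₀); ½(v + q₀)ᵀ, κ − x̂ᵀv − √γ̄‖Aᵀv‖_q] is positive semidefinite. -/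

import Mathlib

open Matrix MeasureTheory ENNReal

noncomputable section

/-- The `p`-norm on `ι → ℝ` for an extended-real exponent `p ∈ [1,∞]`. -/
def pNormE {ι : Type*} [Fintype ι] (p : ℝ≥0∞) (x : ι → ℝ) : ℝ :=
  if p = ∞ then ⨆ i, |x i| else (∑ i, |x i| ^ p.toReal) ^ (1 / p.toReal)

/-- A core set `{x̂ + Aζ : ‖ζ‖_p ≤ √γ̄}`. -/
def coreSetE {n : ℕ} (xhat : Fin n → ℝ) (A : Matrix (Fin n) (Fin n) ℝ)
    (γbar : ℝ) (p : ℝ≥0∞) : Set (Fin n → ℝ) :=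
  {x | ∃ ζ : Fin n → ℝ, pNormE p ζ ≤ Real.sqrt γbar ∧ x = xhat + A.mulVec ζ}

/-- The `p`-distance `min_{x'∈Y} ‖x − x'‖_p` from `x` to a set `Y`. -/
def distToSet {n : ℕ} (p : ℝ≥0∞) (Y : Set (Fin n → ℝ)) (x : Fin n → ℝ) : ℝ :=
  sInf ((fun x' => pNormE p (x - x')) '' Y)

/-- The symmetric block matrix `[Λ, β; βᵀ, c]`. -/
def blockMx {ι : Type*} (Λ : Matrix ι ι ℝ) (β : ι → ℝ) (c : ℝ) :
    Matrix (ι ⊕ Unit) (ι ⊕ Unit) ℝ :=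
  Matrix.fromBlocks Λ (Matrix.of fun i _ => β i) (Matrix.of fun _ j => β j)
    (Matrix.of fun _ _ => c)

section PNorm

variable {ι : Type*} [Fintype ι] {p q : ℝ≥0∞}

lemma pNormE_eq_norm (hp : 1 ≤ p) (x : ι → ℝ) :
    pNormE p x = @norm (PiLp p (fun _ : ι => ℝ)) (haveI : Fact (1 ≤ p) := ⟨hp⟩; PiLp.instNorm p _)
      ((WithLp.equiv p (ι → ℝ)).symm x) := by
  haveI : Fact (1 ≤ p) := ⟨hp⟩
  rcases eq_or_ne p ∞ with rfl | hne
  · rw [pNormE, if_pos rfl, PiLp.norm_eq_ciSup]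
    simp [Real.norm_eq_abs]
  · have h0 : 0 < p.toReal :=
      ENNReal.toReal_pos (lt_of_lt_of_le zero_lt_one hp).ne' hne
    rw [pNormE, if_neg hne, PiLp.norm_eq_sum h0]
    simp [Real.norm_eq_abs]

lemma pNormE_nonneg (hp : 1 ≤ p) (x : ι → ℝ) : 0 ≤ pNormE p x := by
  haveI : Fact (1 ≤ p) := ⟨hp⟩
  rw [pNormE_eq_norm hp]; exact norm_nonneg _

lemma pNormE_zero (hp : 1 ≤ p) : pNormE p (0 : ι → ℝ) = 0 := by
  haveI : Fact (1 ≤ p) := ⟨hp⟩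
  rw [pNormE_eq_norm hp]
  exact norm_zero

lemma pNormE_smul (hp : 1 ≤ p) (a : ℝ) (x : ι → ℝ) :
    pNormE p (a • x) = |a| * pNormE p x := by
  haveI : Fact (1 ≤ p) := ⟨hp⟩
  rw [pNormE_eq_norm hp, pNormE_eq_norm hp]
  have : (WithLp.equiv p (ι → ℝ)).symm (a • x) = a • (WithLp.equiv p (ι → ℝ)).symm x := rfl
  rw [this, norm_smul, Real.norm_eq_abs]

lemma pNormE_add_le (hp : 1 ≤ p) (x y : ι → ℝ) :
    pNormE p (x + y) ≤ pNormE p x + pNormE p y := by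
  haveI : Fact (1 ≤ p) := ⟨hp⟩
  rw [pNormE_eq_norm hp, pNormE_eq_norm hp, pNormE_eq_norm hp]
  have : (WithLp.equiv p (ι → ℝ)).symm (x + y)
      = (WithLp.equiv p (ι → ℝ)).symm x + (WithLp.equiv p (ι → ℝ)).symm y := rfl
  rw [this]
  exact norm_add_le _ _

lemma pNormE_continuous (hp : 1 ≤ p) : Continuous (pNormE p : (ι → ℝ) → ℝ) := by
  haveI : Fact (1 ≤ p) := ⟨hp⟩
  have h : Continuous fun x : ι → ℝ =>
      @norm (PiLp p (fun _ : ι => ℝ)) _ ((WithLp.equiv p (ι → ℝ)).symm x) :=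
    continuous_norm.comp (PiLp.continuousLinearEquiv p ℝ (fun _ : ι => ℝ)).symm.continuous
  convert h using 1
  funext x
  exact pNormE_eq_norm hp x

end PNorm

section Holder
variable {ι : Type*} [Fintype ι] {p q : ℝ≥0∞}

lemma conj_trichotomy (h : p.HolderConjugate q) :
    (p = 1 ∧ q = ∞) ∨ (p = ∞ ∧ q = 1) ∨
      (p ≠ ∞ ∧ q ≠ ∞ ∧ Real.HolderConjugate p.toReal q.toReal) := by
  have hsum := ENNReal.HolderConjugate.inv_add_inv_eq_one p q
  rcases eq_or_ne p ∞ with rfl | hpne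
  · refine Or.inr (Or.inl ⟨rfl, ?_⟩)
    simp only [ENNReal.inv_top, zero_add] at hsum
    simpa [ENNReal.inv_eq_one] using hsum
  rcases eq_or_ne q ∞ with rfl | hqne
  · refine Or.inl ⟨?_, rfl⟩
    simp only [ENNReal.inv_top, add_zero] at hsum
    simpa [ENNReal.inv_eq_one] using hsum
  refine Or.inr (Or.inr ⟨hpne, hqne, Real.holderConjugate_iff.mpr ⟨?_, ?_⟩⟩)
  · -- 1 < p.toReal
    have hq0 : q ≠ 0 := ENNReal.HolderConjugate.ne_zero q p
    have hplt : p⁻¹ < 1 := by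
      calc p⁻¹ < p⁻¹ + q⁻¹ :=
            ENNReal.lt_add_right (by simpa using ENNReal.HolderConjugate.ne_zero p q) (by simpa using hqne)
        _ = 1 := hsum
    have hp1 : 1 < p := by
      have := ENNReal.inv_lt_inv.mpr hplt
      simpa using this
    have : 1 < p.toReal := by
      rw [← ENNReal.toReal_one]
      exact ENNReal.toReal_lt_toReal (by simp) hpne |>.mpr hp1
    exact this
  · -- inv sum
    have hp0 : p ≠ 0 := ENNReal.HolderConjugate.ne_zero p q
    have hq0 : q ≠ 0 := ENNReal.HolderConjugate.ne_zero q p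
    have h1 : (p⁻¹ + q⁻¹).toReal = (1:ℝ≥0∞).toReal := by rw [hsum]
    rw [ENNReal.toReal_add (by simpa using hp0) (by simpa using hq0)] at h1
    rw [ENNReal.toReal_inv, ENNReal.toReal_inv] at h1
    simpa using h1

lemma abs_le_pNormE_top (z : ι → ℝ) (i : ι) : |z i| ≤ pNormE ∞ z := by
  rw [pNormE, if_pos rfl]
  exact le_ciSup (Finite.bddAbove_range fun j => |z j|) i

lemma pNormE_one_eq (x : ι → ℝ) : pNormE 1 x = ∑ i, |x i| := by
  rw [pNormE, if_neg (by simp)]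
  simp

lemma pNormE_toReal_eq (hne : p ≠ ∞) (x : ι → ℝ) :
    pNormE p x = (∑ i, |x i| ^ p.toReal) ^ (1 / p.toReal) := by
  rw [pNormE, if_neg hne]

lemma pNormE_top_eq (x : ι → ℝ) : pNormE ∞ x = ⨆ i, |x i| := by rw [pNormE, if_pos rfl]

lemma pNormE_holder (h : p.HolderConjugate q) (v z : ι → ℝ) :
    v ⬝ᵥ z ≤ pNormE p v * pNormE q z := by
  rcases conj_trichotomy h with ⟨rfl, rfl⟩ | ⟨rfl, rfl⟩ | ⟨hpne, hqne, hconj⟩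
  · rw [pNormE_one_eq]
    calc v ⬝ᵥ z ≤ ∑ i, |v i| * |z i| := by
          refine Finset.sum_le_sum fun i _ => ?_
          calc v i * z i ≤ |v i * z i| := le_abs_self _
          _ = |v i| * |z i| := abs_mul _ _
      _ ≤ ∑ i, |v i| * pNormE ∞ z := by
          refine Finset.sum_le_sum fun i _ => ?_
          exact mul_le_mul_of_nonneg_left (abs_le_pNormE_top z i) (abs_nonneg _)
      _ = (∑ i, |v i|) * pNormE ∞ z := by rw [← Finset.sum_mul]
  · rw [pNormE_one_eq, pNormE_top_eq]
    calc v ⬝ᵥ z ≤ ∑ i, |v i| * |z i| := by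
          refine Finset.sum_le_sum fun i _ => ?_
          calc v i * z i ≤ |v i * z i| := le_abs_self _
          _ = |v i| * |z i| := abs_mul _ _
      _ ≤ ∑ i, (⨆ j, |v j|) * |z i| := by
          refine Finset.sum_le_sum fun i _ => ?_
          exact mul_le_mul_of_nonneg_right ((pNormE_top_eq v) ▸ abs_le_pNormE_top v i)
            (abs_nonneg _)
      _ = (⨆ i, |v i|) * ∑ i, |z i| := by rw [← Finset.mul_sum]
  · rw [pNormE_toReal_eq hpne, pNormE_toReal_eq hqne]
    exact Real.inner_le_Lp_mul_Lq (s := Finset.univ) (f := v) (g := z) hconj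

lemma real_mul_sign_self (x : ℝ) : x * Real.sign x = |x| := by
  rcases lt_trichotomy x 0 with h | h | h
  · rw [Real.sign_of_neg h, abs_of_neg h]; ring
  · simp [h]
  · rw [Real.sign_of_pos h, abs_of_pos h]; ring

lemma abs_sign_le_one (x : ℝ) : |Real.sign x| ≤ 1 := by
  rcases lt_trichotomy x 0 with h | h | h
  · rw [Real.sign_of_neg h]; norm_num
  · simp [h]
  · rw [Real.sign_of_pos h]; norm_num

lemma pNormE_exists_dual [Nonempty ι] (h : p.HolderConjugate q) (w : ι → ℝ) :
    ∃ ζ : ι → ℝ, pNormE p ζ ≤ 1 ∧ w ⬝ᵥ ζ = pNormE q w := by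
  classical
  rcases conj_trichotomy h with ⟨rfl, rfl⟩ | ⟨rfl, rfl⟩ | ⟨hpne, hqne, hconj⟩
  · -- p = 1, q = ∞ : pick coordinate with max abs
    obtain ⟨j, hj⟩ := Finite.exists_max fun i => |w i|
    refine ⟨(Pi.single j (Real.sign (w j)) : ι → ℝ), ?_, ?_⟩
    · rw [pNormE_one_eq]
      have : ∀ i, |(Pi.single j (Real.sign (w j)) : ι → ℝ) i| = if i = j then |Real.sign (w j)| else 0 := by
        intro i
        by_cases hij : i = j
        · subst hij; simp
        · simp [Pi.single_eq_of_ne hij, hij]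
      rw [Finset.sum_congr rfl fun i _ => this i, Finset.sum_ite_eq' Finset.univ j]
      simpa using abs_sign_le_one (w j)
    · rw [pNormE_top_eq]
      have hsup : (⨆ i, |w i|) = |w j| :=
        le_antisymm (ciSup_le fun i => hj i) (le_ciSup (Finite.bddAbove_range fun i => |w i|) j)
      rw [hsup]
      have : ∀ i, w i * (Pi.single j (Real.sign (w j)) : ι → ℝ) i
          = if i = j then w j * Real.sign (w j) else 0 := by
        intro i
        by_cases hij : i = j
        · subst hij; simp
        · simp [Pi.single_eq_of_ne hij, hij]
      rw [dotProduct, Finset.sum_congr rfl fun i _ => this i,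
        Finset.sum_ite_eq' Finset.univ j]
      simpa using real_mul_sign_self (w j)
  · -- p = ∞, q = 1
    refine ⟨fun i => Real.sign (w i), ?_, ?_⟩
    · rw [pNormE_top_eq]
      exact ciSup_le fun i => abs_sign_le_one (w i)
    · rw [pNormE_one_eq, dotProduct]
      exact Finset.sum_congr rfl fun i _ => real_mul_sign_self (w i)
  · -- both finite
    set pr := p.toReal
    set qr := q.toReal
    have hpr1 : 1 < pr := hconj.lt
    have hqr1 : 1 < qr := hconj.symm.lt
    have hq0 : 0 < qr := lt_trans zero_lt_one hqr1
    have hqm1 : 0 < qr - 1 := by linarith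
    have hkey : (qr - 1) * pr = qr := by
      have h1 : pr⁻¹ + qr⁻¹ = 1 := hconj.inv_add_inv_eq_one
      have hp0 : (0:ℝ) < pr := lt_trans zero_lt_one hpr1
      field_simp at h1
      nlinarith
    set S := ∑ i, |w i| ^ qr with hS
    have hSnn : 0 ≤ S := Finset.sum_nonneg fun i _ => Real.rpow_nonneg (abs_nonneg _) _
    set N := pNormE q w with hN
    have hNval : N = S ^ (1/qr) := pNormE_toReal_eq hqne w
    rcases eq_or_lt_of_le hSnn with hS0 | hSpos
    · -- S = 0 hence w = 0, take ζ = 0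
      refine ⟨0, ?_, ?_⟩
      · rw [show pNormE p (0 : ι → ℝ) = 0 from by
          rw [pNormE_toReal_eq hpne]
          simp only [Pi.zero_apply, abs_zero,
            Real.zero_rpow (ne_of_gt (lt_trans zero_lt_one hpr1)), Finset.sum_const_zero, one_div]
          rw [show (0:ℝ) ^ p.toReal = 0 from Real.zero_rpow (ne_of_gt (lt_trans zero_lt_one hpr1)),
            Finset.sum_const_zero]
          exact Real.zero_rpow (inv_ne_zero (ne_of_gt (lt_trans zero_lt_one hpr1)))]
        norm_num
      · rw [hNval, ← hS0, one_div,
          Real.zero_rpow (inv_ne_zero (ne_of_gt (lt_trans zero_lt_one hqr1)))]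
        simp
    · -- S > 0
      have hNpos : 0 < N := by
        rw [hNval]; exact Real.rpow_pos_of_pos hSpos _
      have hNqr : N ^ qr = S := by
        rw [hNval, ← Real.rpow_mul hSnn, one_div, inv_mul_cancel₀ (ne_of_gt hq0), Real.rpow_one]
      refine ⟨fun i => Real.sign (w i) * |w i| ^ (qr - 1) / N ^ (qr - 1), ?_, ?_⟩
      · -- p-norm equals 1
        have habs : ∀ i, |Real.sign (w i) * |w i| ^ (qr - 1) / N ^ (qr - 1)| ^ pr
            = |w i| ^ qr / S := by
          intro i
          rcases eq_or_ne (w i) 0 with hwi | hwi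
          · rw [hwi]
            simp [Real.zero_rpow (ne_of_gt hqm1), Real.zero_rpow (ne_of_gt hq0),
              Real.zero_rpow (ne_of_gt (lt_trans zero_lt_one hpr1))]
          · have hwpos : 0 < |w i| := abs_pos.mpr hwi
            have hsgn : |Real.sign (w i)| = 1 := by
              rcases lt_trichotomy (w i) 0 with hlt | heq | hgt
              · rw [Real.sign_of_neg hlt]; norm_num
              · exact absurd heq hwi
              · rw [Real.sign_of_pos hgt]; norm_num
            rw [abs_div, abs_mul, hsgn, one_mul,
              abs_of_nonneg (Real.rpow_nonneg (abs_nonneg _) _),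
              abs_of_nonneg (Real.rpow_nonneg (le_of_lt hNpos) _),
              Real.div_rpow (Real.rpow_nonneg (abs_nonneg _) _)
                (Real.rpow_nonneg (le_of_lt hNpos) _),
              ← Real.rpow_mul (abs_nonneg _), ← Real.rpow_mul (le_of_lt hNpos), hkey, hNqr]
        rw [pNormE_toReal_eq hpne]
        rw [Finset.sum_congr rfl fun i _ => habs i, ← Finset.sum_div, ← hS,
          div_self (ne_of_gt hSpos), Real.one_rpow]
      · -- dot product equals N
        have hdot : ∀ i, w i * (Real.sign (w i) * |w i| ^ (qr - 1) / N ^ (qr - 1))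
            = |w i| ^ qr / N ^ (qr - 1) := by
          intro i
          rcases eq_or_ne (w i) 0 with hwi | hwi
          · rw [hwi]; simp [Real.zero_rpow (ne_of_gt hq0)]
          · have hwpos : 0 < |w i| := abs_pos.mpr hwi
            rw [show w i * (Real.sign (w i) * |w i| ^ (qr - 1) / N ^ (qr - 1))
                = (w i * Real.sign (w i)) * |w i| ^ (qr - 1) / N ^ (qr - 1) from by ring,
              real_mul_sign_self]
            congr 1
            rw [← Real.rpow_one_add' (le_of_lt hwpos) (by linarith)]
            ring_nf
        rw [dotProduct, Finset.sum_congr rfl fun i _ => hdot i, ← Finset.sum_div, ← hS, ← hNqr]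
        rw [← Real.rpow_sub hNpos]
        norm_num

end Holder


section Block

variable {n : ℕ}

lemma blockMx_quad (Λ : Matrix (Fin n) (Fin n) ℝ) (β : Fin n → ℝ) (c₀ : ℝ)
    (x : Fin n → ℝ) (t : ℝ) :
    (Sum.elim x (fun _ => t)) ⬝ᵥ (blockMx Λ β c₀).mulVec (Sum.elim x (fun _ => t))
      = x ⬝ᵥ Λ.mulVec x + 2 * (β ⬝ᵥ x) * t + c₀ * t ^ 2 := by
  rw [blockMx, Matrix.fromBlocks_mulVec, sumElim_dotProduct_sumElim]
  have hB : (Matrix.of fun i (_ : Unit) => β i).mulVec (fun _ => t) = fun i => β i * t := by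
    ext i; simp [Matrix.mulVec, dotProduct]
  have hC : (Matrix.of fun (_ : Unit) j => β j).mulVec x = fun _ => β ⬝ᵥ x := by
    ext u; simp [Matrix.mulVec, dotProduct]
  have hD : (Matrix.of fun (_ : Unit) (_ : Unit) => c₀).mulVec (fun _ => t)
      = fun _ => c₀ * t := by
    ext u; simp [Matrix.mulVec, dotProduct]
  simp only [Sum.elim_comp_inl, Sum.elim_comp_inr]
  rw [hB, hC, hD, dotProduct_add, dotProduct_add]
  have h1 : x ⬝ᵥ (fun i => β i * t) = (β ⬝ᵥ x) * t := by
    rw [dotProduct, dotProduct, Finset.sum_mul]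
    exact Finset.sum_congr rfl fun i _ => by ring
  have h2 : (fun _ : Unit => t) ⬝ᵥ (fun _ : Unit => β ⬝ᵥ x) = t * (β ⬝ᵥ x) := by
    simp [dotProduct]
  have h3 : (fun _ : Unit => t) ⬝ᵥ (fun _ : Unit => c₀ * t) = t * (c₀ * t) := by
    simp [dotProduct]
  rw [h1, h2, h3]; ring

lemma posSemidef_blockMx_iff {Λ : Matrix (Fin n) (Fin n) ℝ} (hΛ : Λ.PosSemidef)
    (β : Fin n → ℝ) (c₀ : ℝ) :
    (blockMx Λ β c₀).PosSemidef ↔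
      ∀ x : Fin n → ℝ, 0 ≤ x ⬝ᵥ Λ.mulVec x + 2 * (β ⬝ᵥ x) + c₀ := by
  constructor
  · intro hpsd x
    have := hpsd.dotProduct_mulVec_nonneg (Sum.elim x (fun _ => 1))
    rw [star_trivial, blockMx_quad] at this
    simpa using this
  · intro h
    refine Matrix.PosSemidef.of_dotProduct_mulVec_nonneg ?_ ?_
    · -- Hermitian
      rw [blockMx, Matrix.IsHermitian, Matrix.fromBlocks_conjTranspose]
      have h1 : Λᴴ = Λ := hΛ.1
      have h2 : (Matrix.of fun (_:Unit) j => β j)ᴴ = (Matrix.of fun i (_:Unit) => β i) := by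
        ext i u; simp
      have h3 : (Matrix.of fun i (_:Unit) => β i)ᴴ = (Matrix.of fun (_:Unit) j => β j) := by
        ext u j; simp
      have h4 : (Matrix.of fun (_:Unit) (_:Unit) => c₀)ᴴ = Matrix.of fun (_:Unit) (_:Unit) => c₀ := by
        ext u u'; simp
      rw [h1, h2, h3, h4]
    · intro y
      rw [star_trivial]
      have hy : y = Sum.elim (y ∘ Sum.inl) (fun _ => y (Sum.inr ())) := by
        funext s; rcases s with i | u
        · rfl
        · cases u; rfl
      rw [hy, blockMx_quad]
      set x := y ∘ Sum.inl
      set t := y (Sum.inr ())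
      rcases eq_or_ne t 0 with ht | ht
      · rw [ht]
        simpa using hΛ.dotProduct_mulVec_nonneg x
      · have hx := h (t⁻¹ • x)
        have e1 : (t⁻¹ • x) ⬝ᵥ Λ.mulVec (t⁻¹ • x) = t⁻¹ * t⁻¹ * (x ⬝ᵥ Λ.mulVec x) := by
          rw [Matrix.mulVec_smul, dotProduct_smul, smul_dotProduct]
          simp [smul_eq_mul]; ring
        have e2 : β ⬝ᵥ (t⁻¹ • x) = t⁻¹ * (β ⬝ᵥ x) := by
          rw [dotProduct_smul]; simp [smul_eq_mul]
        rw [e1, e2] at hx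
        have ht2 : (0:ℝ) < t ^ 2 := by positivity
        have := mul_nonneg (le_of_lt ht2) hx
        have hexp : t ^ 2 * (t⁻¹ * t⁻¹ * (x ⬝ᵥ Λ.mulVec x) + 2 * (t⁻¹ * (β ⬝ᵥ x)) + c₀)
            = x ⬝ᵥ Λ.mulVec x + 2 * (β ⬝ᵥ x) * t + c₀ * t ^ 2 := by
          field_simp
        rwa [hexp] at this

lemma clm_pi_decomp (f : (Fin n → ℝ) →L[ℝ] ℝ) (z : Fin n → ℝ) :
    f z = ∑ i, z i * f (Pi.single i 1) := by
  have hz : z = ∑ i, z i • (Pi.single i 1 : Fin n → ℝ) := by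
    funext j
    rw [Finset.sum_apply]
    simp [Pi.single_apply]
  conv_lhs => rw [hz]
  rw [map_sum]
  exact Finset.sum_congr rfl fun i _ => by rw [f.map_smul, smul_eq_mul]

lemma clm_prod_decomp (f : ((Fin n → ℝ) × ℝ) →L[ℝ] ℝ) (z : Fin n → ℝ) (t : ℝ) :
    f (z, t) = (fun i => f (Pi.single i 1, 0)) ⬝ᵥ z + t * f (0, 1) := by
  have hsplit : ((z, t) : (Fin n → ℝ) × ℝ) = (z, 0) + t • ((0 : Fin n → ℝ), (1:ℝ)) := by
    ext <;> simp
  rw [hsplit, f.map_add, f.map_smul, smul_eq_mul]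
  congr 1
  have : ((z, 0) : (Fin n → ℝ) × ℝ) = (ContinuousLinearMap.inl ℝ (Fin n → ℝ) ℝ) z := rfl
  rw [this, ← ContinuousLinearMap.comp_apply,
    clm_pi_decomp (f.comp (ContinuousLinearMap.inl ℝ (Fin n → ℝ) ℝ)) z]
  rw [dotProduct]
  exact Finset.sum_congr rfl fun i _ => by
    rw [ContinuousLinearMap.comp_apply]
    show z i * f _ = f (Pi.single i 1, 0) * z i
    rw [mul_comm]
    rfl

end Block

/-- The semi-infinite constraint
`xᵀΛx + q₀ᵀx + κ + c·min_{x'∈Y}‖x − x'‖_p ≥ 0 ∀x` for a core set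
`Y = {x̂ + Aζ : ‖ζ‖_p ≤ √γ̄}` holds iff there is `v` with `‖v‖_q ≤ c` such that
`[Λ, ½(v + q₀); ½(v + q₀)ᵀ, κ − x̂ᵀv − √γ̄‖Aᵀv‖_q] ⪰ 0`. -/
theorem semiInfinite_constraint_iff_sdp {n : ℕ} (hn : 1 ≤ n)
    (xhat : Fin n → ℝ) (A : Matrix (Fin n) (Fin n) ℝ)
    (γbar : ℝ) (hγbar : 0 < γbar)
    (p q : ℝ≥0∞) (hp : 1 ≤ p) (hq : 1 ≤ q) (hpq : 1 / p + 1 / q = 1)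
    (Λ : Matrix (Fin n) (Fin n) ℝ) (hΛ : Λ.PosSemidef)
    (q₀ : Fin n → ℝ) (κ c : ℝ) (hc : 0 ≤ c) :
    (∀ x : Fin n → ℝ,
        0 ≤ x ⬝ᵥ Λ.mulVec x + q₀ ⬝ᵥ x + κ
          + c * distToSet p (coreSetE xhat A γbar p) x) ↔
      ∃ v : Fin n → ℝ, pNormE q v ≤ c ∧
        (blockMx Λ ((1 / 2 : ℝ) • (v + q₀))
          (κ - xhat ⬝ᵥ v - Real.sqrt γbar * pNormE q (Aᵀ.mulVec v))).PosSemidef := by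
  haveI : Nonempty (Fin n) := ⟨⟨0, hn⟩⟩
  have hpq' : ENNReal.HolderConjugate p q := ENNReal.holderConjugate_iff.mpr (by simpa [one_div] using hpq)
  have hγnn : 0 ≤ Real.sqrt γbar := Real.sqrt_nonneg _
  have hYmem : xhat ∈ coreSetE xhat A γbar p :=
    ⟨0, by rw [pNormE_zero hp]; exact hγnn, by simp⟩
  have hdotAT : ∀ (v ζ : Fin n → ℝ), v ⬝ᵥ A.mulVec ζ = (Aᵀ.mulVec v) ⬝ᵥ ζ := fun v ζ => by
    rw [Matrix.dotProduct_mulVec, Matrix.mulVec_transpose]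
  have hATnn : ∀ v : Fin n → ℝ, 0 ≤ pNormE q (Aᵀ.mulVec v) := fun v => pNormE_nonneg hq _
  have hsupu : ∀ (v x' : Fin n → ℝ), x' ∈ coreSetE xhat A γbar p →
      v ⬝ᵥ x' ≤ v ⬝ᵥ xhat + Real.sqrt γbar * pNormE q (Aᵀ.mulVec v) := by
    rintro v x' ⟨ζ, hζ, rfl⟩
    rw [dotProduct_add]
    have h1 : v ⬝ᵥ A.mulVec ζ ≤ pNormE q (Aᵀ.mulVec v) * pNormE p ζ := by
      rw [hdotAT]
      exact pNormE_holder hpq'.symm _ _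
    have h2 : pNormE q (Aᵀ.mulVec v) * pNormE p ζ
        ≤ pNormE q (Aᵀ.mulVec v) * Real.sqrt γbar :=
      mul_le_mul_of_nonneg_left hζ (hATnn v)
    nlinarith [le_trans h1 h2]
  have hsupa : ∀ v : Fin n → ℝ, ∃ x' ∈ coreSetE xhat A γbar p,
      v ⬝ᵥ x' = v ⬝ᵥ xhat + Real.sqrt γbar * pNormE q (Aᵀ.mulVec v) := by
    intro v
    obtain ⟨ζ₀, hζ₀, hζdot⟩ := pNormE_exists_dual hpq' (Aᵀ.mulVec v)
    refine ⟨xhat + A.mulVec (Real.sqrt γbar • ζ₀), ⟨Real.sqrt γbar • ζ₀, ?_, rfl⟩, ?_⟩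
    · rw [pNormE_smul hp, abs_of_nonneg hγnn]
      calc Real.sqrt γbar * pNormE p ζ₀ ≤ Real.sqrt γbar * 1 :=
            mul_le_mul_of_nonneg_left hζ₀ hγnn
        _ = Real.sqrt γbar := mul_one _
    · rw [dotProduct_add, hdotAT, dotProduct_smul, hζdot, smul_eq_mul]
  have hbdd : ∀ x : Fin n → ℝ,
      BddBelow ((fun x' => pNormE p (x - x')) '' coreSetE xhat A γbar p) := by
    intro x
    exact ⟨0, by rintro y ⟨x', hx', rfl⟩; exact pNormE_nonneg hp _⟩
  have hdist_le : ∀ (x x' : Fin n → ℝ), x' ∈ coreSetE xhat A γbar p →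
      distToSet p (coreSetE xhat A γbar p) x ≤ pNormE p (x - x') := by
    intro x x' hx'
    exact csInf_le (hbdd x) ⟨x', hx', rfl⟩
  constructor
  · -- forward direction
    intro H
    set φ : (Fin n → ℝ) → ℝ := fun x => x ⬝ᵥ Λ.mulVec x + q₀ ⬝ᵥ x + κ with hφ
    have hφconv : ∀ (x y : Fin n → ℝ) (a b : ℝ), 0 ≤ a → 0 ≤ b → a + b = 1 →
        φ (a • x + b • y) ≤ a * φ x + b * φ y := by
      intro x y a b ha hb hab
      have hsq : 0 ≤ (x - y) ⬝ᵥ Λ.mulVec (x - y) := by simpa using hΛ.dotProduct_mulVec_nonneg (x - y)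
      have hexp : (x - y) ⬝ᵥ Λ.mulVec (x - y)
          = x ⬝ᵥ Λ.mulVec x - x ⬝ᵥ Λ.mulVec y - y ⬝ᵥ Λ.mulVec x + y ⬝ᵥ Λ.mulVec y := by
        simp only [Matrix.mulVec_sub, dotProduct_sub, sub_dotProduct]
        ring
      have hq1 : φ (a • x + b • y) = a^2 * (x ⬝ᵥ Λ.mulVec x) + a*b*(x ⬝ᵥ Λ.mulVec y)
          + a*b*(y ⬝ᵥ Λ.mulVec x) + b^2*(y ⬝ᵥ Λ.mulVec y)
          + a*(q₀ ⬝ᵥ x) + b*(q₀ ⬝ᵥ y) + κ := by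
        simp only [hφ, Matrix.mulVec_add, Matrix.mulVec_smul, dotProduct_add,
          add_dotProduct, dotProduct_smul, smul_dotProduct, smul_eq_mul]
        ring
      have hprod : 0 ≤ a * b * (x ⬝ᵥ Λ.mulVec x - x ⬝ᵥ Λ.mulVec y - y ⬝ᵥ Λ.mulVec x
          + y ⬝ᵥ Λ.mulVec y) := by
        rw [← hexp]; exact mul_nonneg (mul_nonneg ha hb) hsq
      rw [hq1]
      simp only [hφ]
      have hb' : b = 1 - a := by linarith
      subst hb'
      nlinarith [hprod]
    have Hpt : ∀ (x x' : Fin n → ℝ), x' ∈ coreSetE xhat A γbar p →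
        0 ≤ φ x + c * pNormE p (x - x') := by
      intro x x' hx'
      have h1 := H x
      have h2 : c * distToSet p (coreSetE xhat A γbar p) x ≤ c * pNormE p (x - x') :=
        mul_le_mul_of_nonneg_left (hdist_le x x' hx') hc
      simp only [hφ]
      linarith
    set C : Set ((Fin n → ℝ) × ℝ) :=
      {z | ∃ x x' : Fin n → ℝ, x' ∈ coreSetE xhat A γbar p ∧ z.1 = x - x' ∧ φ x ≤ z.2} with hCdef
    set D : Set ((Fin n → ℝ) × ℝ) := {z | z.2 + c * pNormE p z.1 < 0} with hDdef
    have hDopen : IsOpen D := by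
      have hcont : Continuous fun z : (Fin n → ℝ) × ℝ => z.2 + c * pNormE p z.1 :=
        continuous_snd.add (continuous_const.mul ((pNormE_continuous hp).comp continuous_fst))
      exact isOpen_lt hcont continuous_const
    have hDconv : Convex ℝ D := by
      intro z hz z' hz' a b ha hb hab
      simp only [hDdef, Set.mem_setOf_eq] at hz hz' ⊢
      have h1 : pNormE p (a • z.1 + b • z'.1) ≤ a * pNormE p z.1 + b * pNormE p z'.1 := by
        calc pNormE p (a • z.1 + b • z'.1) ≤ pNormE p (a • z.1) + pNormE p (b • z'.1) :=
              pNormE_add_le hp _ _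
          _ = a * pNormE p z.1 + b * pNormE p z'.1 := by
              rw [pNormE_smul hp, pNormE_smul hp, abs_of_nonneg ha, abs_of_nonneg hb]
      have hfst : (a • z + b • z').1 = a • z.1 + b • z'.1 := rfl
      have hsnd : (a • z + b • z').2 = a * z.2 + b * z'.2 := rfl
      rw [hfst, hsnd]
      have key : a * (z.2 + c * pNormE p z.1) + b * (z'.2 + c * pNormE p z'.1) < 0 := by
        rcases eq_or_lt_of_le ha with h | h
        · have hb1 : b = 1 := by linarith
          rw [← h, hb1]
          simpa using hz'
        · have t1 : a * (z.2 + c * pNormE p z.1) < 0 := mul_neg_of_pos_of_neg h hz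
          have t2 : b * (z'.2 + c * pNormE p z'.1) ≤ 0 :=
            mul_nonpos_iff.mpr (Or.inl ⟨hb, hz'.le⟩)
          linarith
      linarith [key, mul_le_mul_of_nonneg_left h1 hc]
    have hCconv : Convex ℝ C := by
      rintro z ⟨x₁, x₁', hx₁', hz1, hz2⟩ z' ⟨x₂, x₂', hx₂', hz1', hz2'⟩ a b ha hb hab
      refine ⟨a • x₁ + b • x₂, a • x₁' + b • x₂', ?_, ?_, ?_⟩
      · obtain ⟨ζ₁, hζ₁, rfl⟩ := hx₁'
        obtain ⟨ζ₂, hζ₂, rfl⟩ := hx₂'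
        refine ⟨a • ζ₁ + b • ζ₂, ?_, ?_⟩
        · calc pNormE p (a • ζ₁ + b • ζ₂)
              ≤ pNormE p (a • ζ₁) + pNormE p (b • ζ₂) := pNormE_add_le hp _ _
            _ = a * pNormE p ζ₁ + b * pNormE p ζ₂ := by
                rw [pNormE_smul hp, pNormE_smul hp, abs_of_nonneg ha, abs_of_nonneg hb]
            _ ≤ Real.sqrt γbar := by
                nlinarith [mul_le_mul_of_nonneg_left hζ₁ ha, mul_le_mul_of_nonneg_left hζ₂ hb]
        · funext j
          simp only [Pi.add_apply, Pi.smul_apply, smul_eq_mul, Matrix.mulVec_add,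
            Matrix.mulVec_smul]
          linear_combination xhat j * hab
      · rw [show (a • z + b • z').1 = a • z.1 + b • z'.1 from rfl, hz1, hz1']
        module
      · have h1 := hφconv x₁ x₂ a b ha hb hab
        have h2 : a * φ x₁ + b * φ x₂ ≤ a * z.2 + b * z'.2 :=
          add_le_add (mul_le_mul_of_nonneg_left hz2 ha) (mul_le_mul_of_nonneg_left hz2' hb)
        exact le_trans h1 (le_trans h2 (le_of_eq rfl))
    have hdisj : Disjoint D C := by
      rw [Set.disjoint_left]
      rintro z hzD ⟨x, x', hx', hz1, hz2⟩
      have h0 := Hpt x x' hx'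
      simp only [hDdef, Set.mem_setOf_eq] at hzD
      rw [hz1] at hzD
      linarith
    obtain ⟨f, u₀, hfD, hfC⟩ := geometric_hahn_banach_open hDconv hDopen hCconv hdisj
    set w : Fin n → ℝ := fun i => f (Pi.single i 1, 0) with hw
    set s : ℝ := f (0, 1) with hs
    have hf : ∀ (z : Fin n → ℝ) (t : ℝ), f (z, t) = w ⬝ᵥ z + t * s := by
      intro z t
      rw [hw, hs]
      exact clm_prod_decomp f z t
    have hDmem : ∀ (u : Fin n → ℝ) (t : ℝ), t + c * pNormE p u < 0 → w ⬝ᵥ u + t * s < u₀ := by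
      intro u t ht
      have hm : (u, t) ∈ D := by simp only [hDdef, Set.mem_setOf_eq]; exact ht
      have := hfD (u, t) hm
      rwa [hf] at this
    have hCineq : ∀ (x x' : Fin n → ℝ), x' ∈ coreSetE xhat A γbar p →
        u₀ ≤ w ⬝ᵥ (x - x') + φ x * s := by
      intro x x' hx'
      have hm : ((x - x', φ x) : (Fin n → ℝ) × ℝ) ∈ C := ⟨x, x', hx', rfl, le_refl _⟩
      have := hfC (x - x', φ x) hm
      rwa [hf] at this
    have hs0 : 0 ≤ s := by
      by_contra hcon
      push_neg at hcon
      have hm : ∀ m : ℝ, 0 < m → m * (-s) < u₀ := by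
        intro m hm0
        have := hDmem 0 (-m) (by rw [pNormE_zero hp]; simp only [mul_zero, add_zero]; linarith)
        simpa using this
      have hpos : 0 < -s := by linarith
      set m := max 1 ((u₀ + 1) / (-s)) with hmdef
      have hm1 : 0 < m := lt_of_lt_of_le zero_lt_one (le_max_left _ _)
      have hm2 : (u₀ + 1) / (-s) ≤ m := le_max_right _ _
      have h3 : u₀ + 1 ≤ m * (-s) := by
        rw [div_le_iff₀ hpos] at hm2; linarith
      linarith [hm m hm1]
    have hsne : s ≠ 0 := by
      intro h0
      have h1 := hDmem 0 (-1)
        (by rw [pNormE_zero hp]; simp only [mul_zero, add_zero]; linarith)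
      have h2 := hCineq xhat xhat hYmem
      rw [h0] at h1 h2
      simp [sub_self] at h1 h2
      linarith
    have hspos : 0 < s := lt_of_le_of_ne hs0 (Ne.symm hsne)
    have hkey : ∀ u : Fin n → ℝ, w ⬝ᵥ u ≤ u₀ + c * pNormE p u * s := by
      intro u
      have hstep : ∀ ε : ℝ, 0 < ε → w ⬝ᵥ u ≤ u₀ + c * pNormE p u * s + ε := by
        intro ε hε
        have hεs : 0 < ε / s := div_pos hε hspos
        have hD1 := hDmem u (-(c * pNormE p u) - ε / s) (by linarith)
        have hmul : (-(c * pNormE p u) - ε / s) * s = -(c * pNormE p u * s) - ε := by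
          field_simp
        rw [hmul] at hD1
        linarith
      by_contra hcon
      push_neg at hcon
      have := hstep ((w ⬝ᵥ u - (u₀ + c * pNormE p u * s)) / 2) (by linarith)
      linarith
    have hu₀ : 0 ≤ u₀ := by
      have := hkey 0
      rw [pNormE_zero hp] at this
      simpa using this
    have hkey2 : ∀ u : Fin n → ℝ, w ⬝ᵥ u ≤ c * pNormE p u * s := by
      intro u
      by_contra hcon
      push_neg at hcon
      set d := w ⬝ᵥ u - c * pNormE p u * s with hddef
      have hd : 0 < d := by simp only [hddef]; linarith
      set r := (u₀ + 1) / d with hrdef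
      have hr : 0 < r := div_pos (by linarith) hd
      have h1 := hkey (r • u)
      rw [dotProduct_smul, smul_eq_mul, pNormE_smul hp, abs_of_pos hr] at h1
      have h2 : r * d = u₀ + 1 := by
        rw [hrdef]; field_simp
      nlinarith [h1, h2, hd]
    set v : Fin n → ℝ := s⁻¹ • w with hvdef
    have hvdot : ∀ u : Fin n → ℝ, v ⬝ᵥ u = s⁻¹ * (w ⬝ᵥ u) := by
      intro u
      rw [hvdef, smul_dotProduct, smul_eq_mul]
    have hvdual : ∀ u : Fin n → ℝ, v ⬝ᵥ u ≤ c * pNormE p u := by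
      intro u
      rw [hvdot]
      calc s⁻¹ * (w ⬝ᵥ u) ≤ s⁻¹ * (c * pNormE p u * s) :=
            mul_le_mul_of_nonneg_left (hkey2 u) (inv_nonneg.mpr hs0)
        _ = c * pNormE p u := by field_simp
    have hCs : ∀ (x x' : Fin n → ℝ), x' ∈ coreSetE xhat A γbar p →
        0 ≤ φ x + v ⬝ᵥ (x - x') := by
      intro x x' hx'
      have h1 := hCineq x x' hx'
      rw [hvdot]
      have h5 : s⁻¹ * (w ⬝ᵥ (x - x') + φ x * s) = s⁻¹ * (w ⬝ᵥ (x - x')) + φ x := by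
        field_simp
      linarith [mul_le_mul_of_nonneg_left h1 (inv_nonneg.mpr hs0), h5,
        mul_nonneg (inv_nonneg.mpr hs0) hu₀]
    obtain ⟨ζd, hζd, hζdval⟩ := pNormE_exists_dual hpq' v
    have hvq : pNormE q v ≤ c := by
      rw [← hζdval]
      calc v ⬝ᵥ ζd ≤ c * pNormE p ζd := hvdual ζd
        _ ≤ c * 1 := mul_le_mul_of_nonneg_left hζd hc
        _ = c := mul_one c
    refine ⟨v, hvq, ?_⟩
    rw [posSemidef_blockMx_iff hΛ]
    intro x
    obtain ⟨x'', hx''mem, hx''⟩ := hsupa v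
    have h1 := hCs x x'' hx''mem
    have h2 : v ⬝ᵥ (x - x'') = v ⬝ᵥ x - v ⬝ᵥ x'' := dotProduct_sub _ _ _
    rw [h2, hx''] at h1
    have h3 : 2 * (((1/2:ℝ) • (v + q₀)) ⬝ᵥ x) = v ⬝ᵥ x + q₀ ⬝ᵥ x := by
      rw [smul_dotProduct, smul_eq_mul, add_dotProduct]; ring
    rw [h3]
    have h4 : xhat ⬝ᵥ v = v ⬝ᵥ xhat := dotProduct_comm _ _
    simp only [hφ] at h1
    linarith
  · -- backward direction
    rintro ⟨v, hvq, hpsd⟩ x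
    have hquad := (posSemidef_blockMx_iff hΛ _ _).mp hpsd x
    have h3 : 2 * (((1/2:ℝ) • (v + q₀)) ⬝ᵥ x) = v ⬝ᵥ x + q₀ ⬝ᵥ x := by
      rw [smul_dotProduct, smul_eq_mul, add_dotProduct]; ring
    rw [h3] at hquad
    have hlb : v ⬝ᵥ x - (v ⬝ᵥ xhat + Real.sqrt γbar * pNormE q (Aᵀ.mulVec v))
        ≤ c * distToSet p (coreSetE xhat A γbar p) x := by
      set b := v ⬝ᵥ x - (v ⬝ᵥ xhat + Real.sqrt γbar * pNormE q (Aᵀ.mulVec v)) with hbdef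
      have hel : ∀ x' ∈ coreSetE xhat A γbar p, b ≤ c * pNormE p (x - x') := by
        intro x' hx'
        have h1 : v ⬝ᵥ (x - x') ≤ pNormE q v * pNormE p (x - x') :=
          pNormE_holder hpq'.symm v (x - x')
        have h2 : pNormE q v * pNormE p (x - x') ≤ c * pNormE p (x - x') :=
          mul_le_mul_of_nonneg_right hvq (pNormE_nonneg hp _)
        have h4 := hsupu v x' hx'
        have h5 : v ⬝ᵥ (x - x') = v ⬝ᵥ x - v ⬝ᵥ x' := dotProduct_sub _ _ _
        simp only [hbdef]
        linarith
      rcases eq_or_lt_of_le hc with hc0 | hcpos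
      · have := hel xhat hYmem
        rw [← hc0] at this ⊢
        simpa using this
      · have hbc : b / c ≤ distToSet p (coreSetE xhat A γbar p) x := by
          apply le_csInf
          · exact ⟨_, ⟨xhat, hYmem, rfl⟩⟩
          · rintro y ⟨x', hx', rfl⟩
            rw [div_le_iff₀ hcpos]
            calc b ≤ c * pNormE p (x - x') := hel x' hx'
              _ = pNormE p (x - x') * c := mul_comm _ _
        calc b = c * (b / c) := by field_simp
          _ ≤ c * distToSet p (coreSetE xhat A γbar p) x :=
            mul_le_mul_of_nonneg_left hbc hc
    have h4 : xhat ⬝ᵥ v = v ⬝ᵥ xhat := dotProduct_comm _ _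
    linarith [hquad, hlb]
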